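/- arXiv:2511.12097 — 2 statements merged into one kernel-verified Lean document; each statement's English description precedes it below -/
import Mathlib

section
/- (Representation of N:M sparsity.) For integers 1 ≤ N ≤ M, the N:M mask set satisfies S^{N:M} = { ⊕_{k=1}^{N} a_k : a_k ∈ {e_1, …, e_M} for each k }; that is, a binary vector m ∈ {0,1}^M has between 1 and N nonzero coordinates if and only if it is the probabilistic sum of N standard basis vectors (repetitions allowed). -/
/-- The probabilistic sum of two vectors in `ℝ^M`:
`a ⊕ b := 1 - (1 - a) ⊙ (1 - b)` coordinatewise. -/
def psum {M : ℕ} (a b : Fin M → ℝ) : Fin M → ℝ :=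
  fun i => 1 - (1 - a i) * (1 - b i)

/-- The iterated (left-fold) probabilistic sum `a 0 ⊕ a 1 ⊕ ⋯ ⊕ a (N-1)`
(junk value `0` when `N = 0`). -/
def iterPsum {M : ℕ} : (N : ℕ) → (Fin N → Fin M → ℝ) → Fin M → ℝ
  | 0, _ => fun _ => 0
  | 1, a => a 0
  | (N + 2), a => psum (iterPsum (N + 1) (fun i => a i.castSucc)) (a (Fin.last (N + 1)))

/-- The `j`-th standard basis vector of `ℝ^M`. -/
def stdBasis {M : ℕ} (j : Fin M) : Fin M → ℝ :=
  fun i => if i = j then 1 else 0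

/-- `‖m‖₀`: the number of nonzero coordinates of `m ∈ ℝ^M`. -/
noncomputable def zeroNorm {M : ℕ} (m : Fin M → ℝ) : ℕ :=
  Set.ncard {i : Fin M | m i ≠ 0}

/-- The `N:M` mask set `S^{N:M} = { m ∈ {0,1}^M : 1 ≤ ‖m‖₀ ≤ N }`. -/
def maskSet (M N : ℕ) : Set (Fin M → ℝ) :=
  {m | (∀ i, m i = 0 ∨ m i = 1) ∧ 1 ≤ zeroNorm m ∧ zeroNorm m ≤ N}

lemma iterPsum_basis {M : ℕ} : ∀ (N : ℕ), 1 ≤ N → ∀ (j : Fin N → Fin M),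
    iterPsum N (fun k => stdBasis (j k)) = fun i => if ∃ k, j k = i then (1:ℝ) else 0
  | 0, h, _ => by omega
  | 1, _, j => by
    funext i
    simp only [iterPsum, stdBasis]
    congr 1
    simp [Fin.exists_fin_one, eq_comm]
  | (N + 2), _, j => by
    funext i
    have ih := iterPsum_basis (N + 1) (by omega) (fun k => j k.castSucc)
    simp only [iterPsum, psum, ih, stdBasis]
    have hiff : (∃ k : Fin (N + 2), j k = i) ↔
        (∃ k : Fin (N + 1), j k.castSucc = i) ∨ j (Fin.last (N + 1)) = i := by
      constructor
      · rintro ⟨k, rfl⟩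
        induction k using Fin.lastCases with
        | last => right; rfl
        | cast k => left; exact ⟨k, rfl⟩
      · rintro (⟨k, rfl⟩ | h)
        · exact ⟨_, rfl⟩
        · exact ⟨_, h⟩
    have hc : (i = j (Fin.last (N + 1))) = (j (Fin.last (N + 1)) = i) := propext eq_comm
    have hc2 : ∀ k : Fin (N + 1), (i = j k.castSucc) = (j k.castSucc = i) :=
      fun k => propext eq_comm
    simp only [hc, hc2]
    by_cases h1 : ∃ k : Fin (N + 1), j k.castSucc = i <;>
      by_cases h2 : j (Fin.last (N + 1)) = i <;>
      simp [h1, h2, hiff] <;> ring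

/-- Representation of `N:M` sparsity: for `1 ≤ N ≤ M`, the mask set `S^{N:M}` is
exactly the set of probabilistic sums of `N` standard basis vectors
(repetitions allowed). -/
theorem maskSet_eq_iterPsum_basis (M N : ℕ) (hN : 1 ≤ N) (hNM : N ≤ M) :
    maskSet M N
      = {m | ∃ j : Fin N → Fin M, m = iterPsum N (fun k => stdBasis (j k))} := by
  ext m
  simp only [maskSet, Set.mem_setOf_eq]
  constructor
  · rintro ⟨hbin, h1, h2⟩
    have hfin : ({i : Fin M | m i ≠ 0}).Finite := Set.toFinite _
    set T := hfin.toFinset with hT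
    have hcard : zeroNorm m = T.card := Set.ncard_eq_toFinset_card _ hfin
    have hTpos : 0 < T.card := by omega
    have hTN : T.card ≤ N := by omega
    let e := T.equivFin
    refine ⟨fun k => (e.symm ⟨k % T.card, Nat.mod_lt _ hTpos⟩ : Fin M), ?_⟩
    rw [iterPsum_basis N hN]
    funext i
    have hmem : (∃ k : Fin N, ((e.symm ⟨(k : ℕ) % T.card, Nat.mod_lt _ hTpos⟩ : T) : Fin M) = i)
        ↔ i ∈ T := by
      constructor
      · rintro ⟨k, rfl⟩; exact (e.symm _).2
      · intro hi
        refine ⟨⟨(e ⟨i, hi⟩ : ℕ), lt_of_lt_of_le (e ⟨i, hi⟩).2 hTN⟩, ?_⟩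
        have : ((e ⟨i, hi⟩ : ℕ)) % T.card = (e ⟨i, hi⟩ : ℕ) :=
          Nat.mod_eq_of_lt (e ⟨i, hi⟩).2
        simp only [this]
        have : (⟨(e ⟨i, hi⟩ : ℕ), (e ⟨i, hi⟩).2⟩ : Fin T.card) = e ⟨i, hi⟩ := rfl
        rw [this, Equiv.symm_apply_apply]
    rcases hbin i with h0 | h1
    · have : i ∉ T := by simp [hT, Set.Finite.mem_toFinset, h0]
      rw [if_neg (by rw [hmem]; exact this), h0]
    · have : i ∈ T := by simp [hT, Set.Finite.mem_toFinset, h1]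
      rw [if_pos (hmem.mpr this), h1]
  · rintro ⟨j, rfl⟩
    rw [iterPsum_basis N hN]
    have hset : {i : Fin M | (if ∃ k, j k = i then (1:ℝ) else 0) ≠ 0} = Set.range j := by
      ext i
      by_cases h : ∃ k, j k = i <;> simp [h, Set.mem_setOf_eq, Set.range, one_ne_zero]
    refine ⟨fun i => by by_cases h : ∃ k, j k = i <;> simp [h], ?_, ?_⟩
    · have hne : (Set.range j).Nonempty := ⟨j ⟨0, hN⟩, Set.mem_range_self _⟩
      have := (Set.ncard_pos (Set.toFinite _)).mpr hne
      simp only [zeroNorm, hset]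
      omega
    · have : (Set.range j).ncard ≤ N := by
        classical
        have h1 : Set.range j = ↑(Finset.image j Finset.univ) := by
          ext x; simp
        rw [h1, Set.ncard_coe_finset]
        calc (Finset.image j Finset.univ).card ≤ Finset.univ.card :=
              Finset.card_image_le
          _ = N := by simp
      simp only [zeroNorm, hset]; exact this
end

section
/- (Gumbel-max trick.) Let π = (π_1, …, π_M) be a probability vector with π_s > 0 for all s, and let g_1, …, g_M be independent random variables each following the standard Gumbel distribution. Then almost surely the maximum of the values log(π_s) + g_s over s ∈ {1, …, M} is attained at a unique index, and for every j ∈ {1, …, M}, P(argmax_{s} (log(π_s) + g_s) = j) = π_j. -/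
open MeasureTheory ProbabilityTheory

/-- The standard Gumbel distribution: a probability measure on `ℝ` with cumulative
distribution function `x ↦ exp(-exp(-x))`. -/
def IsStdGumbel (μ : Measure ℝ) : Prop :=
  IsProbabilityMeasure μ ∧
    ∀ x : ℝ, μ (Set.Iic x) = ENNReal.ofReal (Real.exp (-Real.exp (-x)))

open Set Filter

/-- Derivative of the scaled Gumbel CDF `x ↦ exp (-c * exp (-x))`. -/
lemma hasDerivAt_gumbelCDF (c x : ℝ) :
    HasDerivAt (fun y => Real.exp (-c * Real.exp (-y)))
      (c * Real.exp (-x) * Real.exp (-c * Real.exp (-x))) x := by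
  have h0 : HasDerivAt (fun y : ℝ => Real.exp (-y)) (-Real.exp (-x)) x := by
    simpa [Function.comp_def] using (Real.hasDerivAt_exp (-x)).comp x (hasDerivAt_neg x)
  have h1 : HasDerivAt (fun y : ℝ => -c * Real.exp (-y)) (c * Real.exp (-x)) x := by
    simpa [mul_comm, neg_mul] using h0.const_mul (-c)
  simpa [mul_comm, Function.comp_def] using (Real.hasDerivAt_exp _).comp x h1

lemma tendsto_gumbelCDF_atBot {c : ℝ} (hc : 0 < c) :
    Tendsto (fun y => Real.exp (-c * Real.exp (-y))) atBot (nhds 0) := by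
  apply Real.tendsto_exp_atBot.comp
  have h1 : Tendsto (fun y : ℝ => Real.exp (-y)) atBot atTop :=
    Real.tendsto_exp_atTop.comp tendsto_neg_atBot_atTop
  have h2 : Tendsto (fun y : ℝ => c * Real.exp (-y)) atBot atTop := h1.const_mul_atTop hc
  simpa [neg_mul, Function.comp_def] using tendsto_neg_atTop_atBot.comp h2

lemma tendsto_gumbelCDF_atTop (c : ℝ) :
    Tendsto (fun y => Real.exp (-c * Real.exp (-y))) atTop (nhds 1) := by
  have : Tendsto (fun y : ℝ => -c * Real.exp (-y)) atTop (nhds 0) := by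
    simpa using (Real.tendsto_exp_atBot.comp tendsto_neg_atTop_atBot).const_mul (-c)
  simpa [Function.comp_def] using (Real.continuous_exp.tendsto 0).comp this

/-- FTC on `Iic` for a nonnegative derivative with a limit at `-∞`. -/
lemma integrableOn_Iic_and_integral_eq {F f : ℝ → ℝ} {m : ℝ}
    (hd : ∀ x, HasDerivAt F (f x) x) (hpos : ∀ x, 0 ≤ f x)
    (ht : Tendsto F atBot (nhds m)) (a : ℝ) :
    IntegrableOn f (Iic a) ∧ ∫ x in Iic a, f x = F a - m := by
  have hG : ∀ x, HasDerivAt (fun y => -F (-y)) (f (-x)) x := by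
    intro x
    have := ((hd (-x)).comp x (hasDerivAt_neg x)).neg
    rw [show f (-x) = -(f (-x) * -1) by ring]; exact this
  have hGt : Tendsto (fun y => -F (-y)) atTop (nhds (-m)) :=
    (ht.comp tendsto_neg_atTop_atBot).neg
  have hint : IntegrableOn (fun x => f (-x)) (Ioi (-a)) :=
    integrableOn_Ioi_deriv_of_nonneg' (fun x _ => hG x) (fun x _ => hpos (-x)) hGt
  have hval : ∫ x in Ioi (-a), f (-x) = -m - (- F a) := by
    have := integral_Ioi_of_hasDerivAt_of_nonneg' (g := fun y => -F (-y))
      (fun x _ => hG x) (fun x _ => hpos (-x)) hGt (a := -a)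
    simpa using this
  constructor
  · have := (MeasurePreserving.integrableOn_comp_preimage
      (Measure.measurePreserving_neg (volume : Measure ℝ))
      (Homeomorph.neg ℝ).measurableEmbedding).2 hint
    have h2 : ((fun x : ℝ => -x) ⁻¹' (Ioi (-a))) = Iio a := by
      ext x; simp
    rw [h2] at this
    have h3 : ((fun x : ℝ => f (-x)) ∘ Neg.neg) = f := by funext x; simp
    rw [h3] at this
    exact this.congr_set_ae Iio_ae_eq_Iic.symm
  · have h4 : ∫ x in Iic a, f x = ∫ x in Ioi (-a), f (-x) := by
      rw [← integral_comp_neg_Iic a (fun x => f (-x))]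
      simp
    rw [h4, hval]; ring

/-- FTC on the whole real line for a nonnegative derivative with limits at `±∞`. -/
lemma integrable_and_integral_eq {F f : ℝ → ℝ} {m M : ℝ}
    (hd : ∀ x, HasDerivAt F (f x) x) (hpos : ∀ x, 0 ≤ f x)
    (htb : Tendsto F atBot (nhds m)) (htt : Tendsto F atTop (nhds M)) :
    Integrable f ∧ ∫ x, f x = M - m := by
  obtain ⟨hI1, hv1⟩ := integrableOn_Iic_and_integral_eq hd hpos htb 0
  have hI2 : IntegrableOn f (Ioi 0) :=
    integrableOn_Ioi_deriv_of_nonneg' (fun x _ => hd x) (fun x _ => hpos x) htt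
  have hv2 : ∫ x in Ioi (0:ℝ), f x = M - F 0 :=
    integral_Ioi_of_hasDerivAt_of_nonneg' (fun x _ => hd x) (fun x _ => hpos x) htt
  have hint : Integrable f := by
    rw [← integrableOn_univ, ← Iic_union_Ioi (a := (0:ℝ))]
    exact hI1.union hI2
  refine ⟨hint, ?_⟩
  rw [← setIntegral_univ, ← Iic_union_Ioi (a := (0:ℝ)),
    setIntegral_union (Iic_disjoint_Ioi le_rfl) measurableSet_Ioi hI1 hI2, hv1, hv2]
  ring

/-- The key integral: for `a > 0`, `∫ exp (-y) * exp (-a * exp (-y)) dy = 1/a`. -/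
lemma gumbel_key_integral {a : ℝ} (ha : 0 < a) :
    Integrable (fun y => Real.exp (-y) * Real.exp (-a * Real.exp (-y))) ∧
      ∫ y : ℝ, Real.exp (-y) * Real.exp (-a * Real.exp (-y)) = 1 / a := by
  have hd : ∀ x : ℝ, HasDerivAt (fun y => (1/a) * Real.exp (-a * Real.exp (-y)))
      (Real.exp (-x) * Real.exp (-a * Real.exp (-x))) x := by
    intro x
    have := (hasDerivAt_gumbelCDF a x).const_mul (1/a)
    have hh : (1/a) * (a * Real.exp (-x) * Real.exp (-a * Real.exp (-x)))
        = Real.exp (-x) * Real.exp (-a * Real.exp (-x)) := by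
      field_simp
    rwa [hh] at this
  have hpos : ∀ x : ℝ, 0 ≤ Real.exp (-x) * Real.exp (-a * Real.exp (-x)) :=
    fun x => by positivity
  have htb : Tendsto (fun y => (1/a) * Real.exp (-a * Real.exp (-y))) atBot (nhds 0) := by
    simpa using (tendsto_gumbelCDF_atBot ha).const_mul (1/a)
  have htt : Tendsto (fun y => (1/a) * Real.exp (-a * Real.exp (-y))) atTop (nhds (1/a)) := by
    simpa using (tendsto_gumbelCDF_atTop a).const_mul (1/a)
  obtain ⟨h1, h2⟩ := integrable_and_integral_eq hd hpos htb htt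
  exact ⟨h1, by rw [h2]; ring⟩

/-- The standard Gumbel measure, defined by its density. -/
noncomputable def gumbelMeasure : Measure ℝ :=
  volume.withDensity (fun x => ENNReal.ofReal (Real.exp (-x) * Real.exp (-Real.exp (-x))))

lemma gumbelMeasure_Iic (x : ℝ) :
    gumbelMeasure (Iic x) = ENNReal.ofReal (Real.exp (-Real.exp (-x))) := by
  rw [gumbelMeasure, withDensity_apply _ measurableSet_Iic]
  have hd : ∀ t : ℝ, HasDerivAt (fun y => Real.exp (-(1:ℝ) * Real.exp (-y)))
      (Real.exp (-t) * Real.exp (-Real.exp (-t))) t := by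
    intro t
    have := hasDerivAt_gumbelCDF 1 t
    simpa using this
  have hpos : ∀ t : ℝ, 0 ≤ Real.exp (-t) * Real.exp (-Real.exp (-t)) :=
    fun t => by positivity
  obtain ⟨h1, h2⟩ := integrableOn_Iic_and_integral_eq hd hpos
    (tendsto_gumbelCDF_atBot one_pos) x
  rw [← ofReal_integral_eq_lintegral_ofReal h1
    (Filter.Eventually.of_forall fun t => hpos t), h2]
  norm_num

lemma gumbelMeasure_isProbability : IsProbabilityMeasure gumbelMeasure := by
  constructor
  rw [gumbelMeasure, withDensity_apply _ MeasurableSet.univ, Measure.restrict_univ]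
  have hd : ∀ t : ℝ, HasDerivAt (fun y => Real.exp (-(1:ℝ) * Real.exp (-y)))
      (Real.exp (-t) * Real.exp (-Real.exp (-t))) t := by
    intro t; simpa using hasDerivAt_gumbelCDF 1 t
  have hpos : ∀ t : ℝ, 0 ≤ Real.exp (-t) * Real.exp (-Real.exp (-t)) :=
    fun t => by positivity
  have key := gumbel_key_integral one_pos
  rw [← ofReal_integral_eq_lintegral_ofReal (by simpa using key.1)
    (Filter.Eventually.of_forall fun t => hpos t)]
  have : ∫ y : ℝ, Real.exp (-y) * Real.exp (-Real.exp (-y)) = 1 := by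
    have := key.2
    simpa using this
  rw [this]; simp

lemma gumbelMeasure_Iio (x : ℝ) :
    gumbelMeasure (Iio x) = ENNReal.ofReal (Real.exp (-Real.exp (-x))) := by
  have hsing : gumbelMeasure {x} = 0 := by
    rw [gumbelMeasure]
    exact withDensity_absolutelyContinuous volume _ (measure_singleton x)
  have : Iio x = Iic x \ {x} := by ext y; simp [lt_iff_le_and_ne]
  rw [this, measure_diff_null hsing, gumbelMeasure_Iic]

lemma map_eq_gumbelMeasure {Ω : Type*} [MeasurableSpace Ω] {P : Measure Ω} {X : Ω → ℝ}
    (h : IsStdGumbel (Measure.map X P)) : Measure.map X P = gumbelMeasure := by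
  haveI := h.1
  haveI := gumbelMeasure_isProbability
  refine Measure.ext_of_Iic _ _ (fun a => ?_)
  rw [h.2 a, gumbelMeasure_Iic]

open ProbabilityTheory in
lemma joint_eq_pi {Ω : Type*} [MeasurableSpace Ω] {P : Measure Ω} [IsProbabilityMeasure P]
    {M : ℕ} {g : Fin M → Ω → ℝ} (hg : ∀ s, Measurable (g s))
    (hindep : iIndepFun g P)
    (hgumbel : ∀ s, IsStdGumbel (Measure.map (g s) P)) :
    Measure.map (fun ω (i : Fin M) => g i ω) P = Measure.pi (fun _ => gumbelMeasure) := by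
  haveI := gumbelMeasure_isProbability
  symm
  refine Measure.pi_eq (fun s hs => ?_)
  rw [Measure.map_apply (measurable_pi_lambda _ hg) (MeasurableSet.univ_pi hs)]
  have hpre : (fun ω (i : Fin M) => g i ω) ⁻¹' (univ.pi s) = ⋂ i, g i ⁻¹' s i := by
    ext ω; simp [Set.mem_pi]
  rw [hpre, hindep.meas_iInter (fun i => ⟨s i, hs i, rfl⟩)]
  refine Finset.prod_congr rfl (fun i _ => ?_)
  rw [← map_eq_gumbelMeasure (hgumbel i), Measure.map_apply (hg i) (hs i)]

lemma pi_event_measure {M : ℕ} (w : Fin M → ℝ) (hw0 : ∀ s, 0 < w s) (hw1 : ∑ s, w s = 1)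
    (j : Fin M) :
    Measure.pi (fun _ : Fin M => gumbelMeasure)
      {x : Fin M → ℝ | ∀ s : Fin M, s ≠ j → Real.log (w s) + x s < Real.log (w j) + x j}
      = ENNReal.ofReal (w j) := by
  haveI := gumbelMeasure_isProbability
  haveI : Unique {i : Fin M // i = j} := ⟨⟨⟨j, rfl⟩⟩, fun x => Subtype.ext x.2⟩
  set c : ℝ := ∑ s ∈ Finset.univ.erase j, w s with hc
  have hcval : c = 1 - w j := by
    have := Finset.sum_erase_add Finset.univ w (Finset.mem_univ j)
    rw [hw1] at this; linarith
  -- the two measure preserving maps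
  have mp1 := measurePreserving_piEquivPiSubtypeProd (fun _ : Fin M => gumbelMeasure)
    (fun i => i = j)
  have mp2 := (measurePreserving_piUnique (fun _ : {i : Fin M // i = j} => gumbelMeasure)).prod
    (MeasurePreserving.id (Measure.pi (fun _ : {i : Fin M // ¬ i = j} => gumbelMeasure)))
  have mp1' : MeasurePreserving
      (⇑(MeasurableEquiv.piEquivPiSubtypeProd (fun _ : Fin M => ℝ) (fun i => i = j)))
      (Measure.pi fun _ => gumbelMeasure)
      ((Measure.pi fun _ : {i : Fin M // i = j} => gumbelMeasure).prod
        (Measure.pi fun _ : {i : Fin M // ¬ i = j} => gumbelMeasure)) := by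
    convert mp1 using 3 <;> exact Subsingleton.elim _ _
  have mp := mp2.comp mp1'
  set T : Set (ℝ × ({i : Fin M // ¬ i = j} → ℝ)) :=
    {q | ∀ s : {i : Fin M // ¬ i = j},
      Real.log (w s) + q.2 s < Real.log (w j) + q.1} with hT
  have hTmeas : MeasurableSet T := by
    rw [hT]
    have : T = ⋂ s : {i : Fin M // ¬ i = j},
        {q : ℝ × ({i : Fin M // ¬ i = j} → ℝ) |
          Real.log (w s) + q.2 s < Real.log (w j) + q.1} := by
      ext q; simp [hT]
    rw [← hT, this]
    refine MeasurableSet.iInter (fun s => ?_)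
    exact measurableSet_lt (measurable_const.add (measurable_snd.eval))
      (measurable_const.add measurable_fst)
  have hpre : {x : Fin M → ℝ | ∀ s : Fin M, s ≠ j →
      Real.log (w s) + x s < Real.log (w j) + x j}
      = (Prod.map (MeasurableEquiv.piUnique (fun _ : {i : Fin M // i = j} => ℝ)) id ∘
        MeasurableEquiv.piEquivPiSubtypeProd (fun _ : Fin M => ℝ) (fun i => i = j)) ⁻¹' T := by
    ext x
    simp only [Set.mem_preimage, Function.comp_apply, Set.mem_setOf_eq, hT,
      MeasurableEquiv.piEquivPiSubtypeProd, MeasurableEquiv.piUnique,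
      Equiv.piEquivPiSubtypeProd, Equiv.piUnique, MeasurableEquiv.coe_mk, Equiv.coe_fn_mk,
      Prod.map, id_eq, (default : {i : Fin M // i = j}).2]
    constructor
    · rintro h ⟨s, hs⟩; exact h s hs
    · intro h s hs; exact h ⟨s, hs⟩
  rw [hpre, mp.measure_preimage hTmeas.nullMeasurableSet,
    Measure.prod_apply hTmeas]
  -- inner measure
  have hsection : ∀ y : ℝ, (Prod.mk y ⁻¹' T)
      = Set.pi Set.univ (fun s : {i : Fin M // ¬ i = j} =>
          Iio (Real.log (w j) + y - Real.log (w s))) := by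
    intro y; ext z
    simp only [Set.mem_preimage, hT, Set.mem_setOf_eq, Set.mem_pi, Set.mem_univ, mem_Iio,
      forall_true_left]
    constructor
    · intro h s; have := h s; linarith
    · intro h s; have := h s; linarith
  have hinner : ∀ y : ℝ, (Measure.pi (fun _ : {i : Fin M // ¬ i = j} => gumbelMeasure))
      (Prod.mk y ⁻¹' T) = ENNReal.ofReal (Real.exp (-(c / w j) * Real.exp (-y))) := by
    intro y
    rw [hsection y, Measure.pi_pi]
    have hfac : ∀ s : {i : Fin M // ¬ i = j},
        gumbelMeasure (Iio (Real.log (w j) + y - Real.log (w s)))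
        = ENNReal.ofReal (Real.exp (-(w s / w j) * Real.exp (-y))) := by
      intro s
      rw [gumbelMeasure_Iio]
      congr 2
      rw [show -(Real.log (w j) + y - Real.log (w (s : Fin M)))
          = (Real.log (w (s : Fin M)) - Real.log (w j)) + (-y) by ring,
        Real.exp_add, Real.exp_sub, Real.exp_log (hw0 _), Real.exp_log (hw0 j)]
      ring
    simp_rw [hfac]
    rw [← ENNReal.ofReal_prod_of_nonneg (fun s _ => (Real.exp_pos _).le)]
    congr 1
    rw [← Real.exp_sum]
    congr 1
    rw [← Finset.sum_mul]
    have hsub : ∑ s : {i : Fin M // ¬ i = j}, w (s : Fin M) = c := by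
      rw [hc]
      exact (Finset.sum_subtype (Finset.univ.erase j)
        (fun i => by simp [Finset.mem_erase]) w).symm
    have hs2 : (∑ i : {i : Fin M // ¬ i = j}, -(w (i : Fin M) / w j)) = -(c / w j) := by
      rw [Finset.sum_neg_distrib, ← Finset.sum_div, hsub]
    rw [hs2]
  simp_rw [hinner]
  -- outer integral
  have hdensmeas : Measurable (fun x : ℝ =>
      ENNReal.ofReal (Real.exp (-x) * Real.exp (-Real.exp (-x)))) := by
    apply Measurable.ennreal_ofReal
    exact (Real.continuous_exp.comp continuous_neg).mul
      (Real.continuous_exp.comp ((Real.continuous_exp.comp continuous_neg).neg)) |>.measurable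
  have hfmeas : Measurable (fun y : ℝ => ENNReal.ofReal (Real.exp (-(c / w j) * Real.exp (-y)))) := by
    apply Measurable.ennreal_ofReal
    exact (Real.continuous_exp.comp
      ((continuous_const.mul (Real.continuous_exp.comp continuous_neg)))).measurable
  rw [gumbelMeasure, lintegral_withDensity_eq_lintegral_mul volume hdensmeas hfmeas]
  have hcomb : ∀ y : ℝ, (ENNReal.ofReal (Real.exp (-y) * Real.exp (-Real.exp (-y))) *
      ENNReal.ofReal (Real.exp (-(c / w j) * Real.exp (-y))))
      = ENNReal.ofReal (Real.exp (-y) * Real.exp (-(1 / w j) * Real.exp (-y))) := by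
    intro y
    rw [← ENNReal.ofReal_mul (by positivity)]
    congr 1
    rw [mul_assoc, ← Real.exp_add]
    congr 2
    have : (1 : ℝ) / w j = 1 + c / w j := by
      have hj : w j ≠ 0 := (hw0 j).ne'
      rw [hcval]; field_simp; ring
    rw [this]; ring
  have : ∀ y : ℝ, ((fun x : ℝ => ENNReal.ofReal (Real.exp (-x) * Real.exp (-Real.exp (-x)))) *
      (fun y : ℝ => ENNReal.ofReal (Real.exp (-(c / w j) * Real.exp (-y))))) y
      = ENNReal.ofReal (Real.exp (-y) * Real.exp (-(1 / w j) * Real.exp (-y))) := by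
    intro y
    rw [Pi.mul_apply]
    exact hcomb y
  rw [lintegral_congr this]
  have ha : 0 < 1 / w j := one_div_pos.mpr (hw0 j)
  have hnn : (0 : ℝ → ℝ) ≤ᵐ[volume] fun y : ℝ => Real.exp (-y) * Real.exp (-(1 / w j) * Real.exp (-y)) := by
    refine Filter.Eventually.of_forall (fun y => ?_)
    have : (0:ℝ→ℝ) y = 0 := rfl
    rw [this]
    positivity
  obtain ⟨h1, h2⟩ := gumbel_key_integral ha
  rw [← ofReal_integral_eq_lintegral_ofReal h1
    hnn, h2]
  congr 1
  field_simp

/-- The Gumbel-max trick: if `π` is a probability vector with strictly positive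
entries and `g_1, …, g_M` are i.i.d. standard Gumbel random variables, then almost
surely the maximum of `log π_s + g_s` is attained at a unique index, and the
probability that it is attained (strictly) at index `j` equals `π_j`. -/
theorem gumbel_max_trick {Ω : Type*} [MeasurableSpace Ω]
    (P : Measure Ω) [IsProbabilityMeasure P] (M : ℕ)
    (π : Fin M → ℝ) (hπ0 : ∀ s, 0 < π s) (hπ1 : ∑ s, π s = 1)
    (g : Fin M → Ω → ℝ) (hg : ∀ s, Measurable (g s))
    (hindep : iIndepFun g P)
    (hgumbel : ∀ s, IsStdGumbel (Measure.map (g s) P)) :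
    (∀ᵐ ω ∂P, ∃! j : Fin M, ∀ s : Fin M, s ≠ j →
        Real.log (π s) + g s ω < Real.log (π j) + g j ω) ∧
      ∀ j : Fin M,
        P {ω | ∀ s : Fin M, s ≠ j →
            Real.log (π s) + g s ω < Real.log (π j) + g j ω}
          = ENNReal.ofReal (π j) := by
  classical
  have hjoint := joint_eq_pi hg hindep hgumbel
  set A : Fin M → Set Ω := fun j => {ω | ∀ s : Fin M, s ≠ j →
      Real.log (π s) + g s ω < Real.log (π j) + g j ω} with hA
  have hmeasA : ∀ j, MeasurableSet (A j) := by
    intro j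
    have : A j = ⋂ s, ⋂ (_ : s ≠ j),
        {ω | Real.log (π s) + g s ω < Real.log (π j) + g j ω} := by
      ext ω; simp [hA]
    rw [this]
    exact MeasurableSet.iInter fun s => MeasurableSet.iInter fun _ =>
      measurableSet_lt (measurable_const.add (hg s)) (measurable_const.add (hg j))
  have key : ∀ j, P (A j) = ENNReal.ofReal (π j) := by
    intro j
    have hSmeas : MeasurableSet {x : Fin M → ℝ | ∀ s : Fin M, s ≠ j →
        Real.log (π s) + x s < Real.log (π j) + x j} := by
      have : {x : Fin M → ℝ | ∀ s : Fin M, s ≠ j →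
          Real.log (π s) + x s < Real.log (π j) + x j}
          = ⋂ s, ⋂ (_ : s ≠ j),
            {x : Fin M → ℝ | Real.log (π s) + x s < Real.log (π j) + x j} := by
        ext x; simp
      rw [this]
      exact MeasurableSet.iInter fun s => MeasurableSet.iInter fun _ =>
        measurableSet_lt (measurable_const.add (measurable_pi_apply s))
          (measurable_const.add (measurable_pi_apply j))
    have hpre : A j = (fun ω (i : Fin M) => g i ω) ⁻¹'
        {x : Fin M → ℝ | ∀ s : Fin M, s ≠ j →
          Real.log (π s) + x s < Real.log (π j) + x j} := rfl
    rw [hpre, ← Measure.map_apply (measurable_pi_lambda _ hg) hSmeas, hjoint,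
      pi_event_measure π hπ0 hπ1 j]
  refine ⟨?_, key⟩
  have hdisj : Pairwise (Function.onFun Disjoint A) := by
    intro j k hjk
    rw [Function.onFun, Set.disjoint_left]
    intro ω hωj hωk
    have h1 := hωj k (Ne.symm hjk)
    have h2 := hωk j hjk
    linarith
  have hU : P (⋃ j, A j) = 1 := by
    rw [measure_iUnion hdisj hmeasA, tsum_fintype]
    simp_rw [key]
    rw [← ENNReal.ofReal_sum_of_nonneg (fun i _ => (hπ0 i).le), hπ1]
    simp
  have hcompl : P (⋃ j, A j)ᶜ = 0 := by
    rw [measure_compl (MeasurableSet.iUnion hmeasA) (measure_ne_top _ _), hU,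
      measure_univ, tsub_self]
  have hae : ∀ᵐ ω ∂P, ω ∈ ⋃ j, A j := mem_ae_iff.mpr hcompl
  filter_upwards [hae] with ω hω
  obtain ⟨j, hj⟩ := Set.mem_iUnion.1 hω
  refine ⟨j, hj, ?_⟩
  intro k hk
  by_contra hne
  have h1 := hj k hne
  have h2 := hk j (fun h => hne h.symm)
  linarith
end
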